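/- arXiv:2509.20332 — 2 statements merged into one kernel-verified Lean document; each statement's English description precedes it below -/
import Mathlib

section
/- Let X, Y be disjoint sets of distinct reals, N = |X| + |Y|, y ∈ Y, Y' = Y \ {y}. Let y* > max(X ∪ Y') and y_* < min(X ∪ Y'). Then T(Y, X) ≤ max{T({y_*} ∪ Y', X), T({y*} ∪ Y', X)}, i.e., the Ansari-Bradley statistic of Y versus X is maximized over the single value y when it is placed at an extreme rank. -/
open Finset

/-- rank of `x` in `Z`: number of elements of `Z` less than or equal to `x`. -/
noncomputable def rk (x : ℝ) (Z : Finset ℝ) : ℕ := (Z.filter (fun z => z ≤ x)).card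

/-- Ansari-Bradley test statistic. -/
noncomputable def ABT (A B : Finset ℝ) : ℝ :=
  ∑ a ∈ A, |(rk a (A ∪ B) : ℝ) - (((A ∪ B).card : ℝ) + 1) / 2|

lemma rk_insert (t : ℝ) (Z : Finset ℝ) (ht : t ∉ Z) (a : ℝ) :
    rk a (insert t Z) = (if t ≤ a then 1 else 0) + rk a Z := by
  unfold rk
  rw [filter_insert]
  split
  · rw [card_insert_of_notMem (fun h => ht (mem_filter.mp h).1)]
    omega
  · simp

theorem stmt15 (X Y : Finset ℝ) (y : ℝ) (hd : Disjoint X Y) (hy : y ∈ Y)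
    (Y' : Finset ℝ) (hY' : Y' = Y.erase y)
    (ystar ylow : ℝ)
    (hstar : ∀ w ∈ X ∪ Y', w < ystar)
    (hlow : ∀ w ∈ X ∪ Y', ylow < w) :
    ABT Y X ≤ max (ABT (insert ylow Y') X) (ABT (insert ystar Y') X) := by
  classical
  set V := Y' ∪ X with hV
  have hyY' : y ∉ Y' := by rw [hY']; exact notMem_erase y Y
  have hyX : y ∉ X := fun h => (disjoint_left.mp hd h) hy
  have hyV : y ∉ V := by simp [hV, hyY', hyX]
  have hY : Y = insert y Y' := by rw [hY', insert_erase hy]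
  have hstarV : ∀ w ∈ V, w < ystar := fun w hw => hstar w (by rwa [union_comm])
  have hlowV : ∀ w ∈ V, ylow < w := fun w hw => hlow w (by rwa [union_comm])
  have hsV : ystar ∉ V := fun h => lt_irrefl _ (hstarV _ h)
  have hlV : ylow ∉ V := fun h => lt_irrefl _ (hlowV _ h)
  have hsY' : ystar ∉ Y' := fun h => hsV (mem_union_left _ h)
  have hlY' : ylow ∉ Y' := fun h => hlV (mem_union_left _ h)
  set M := V.card with hM
  have hUy : Y ∪ X = insert y V := by rw [hY, insert_union]
  have hUs : insert ystar Y' ∪ X = insert ystar V := insert_union _ _ _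
  have hUl : insert ylow Y' ∪ X = insert ylow V := insert_union _ _ _
  have cardy : (insert y V).card = M + 1 := card_insert_of_notMem hyV
  have cards : (insert ystar V).card = M + 1 := card_insert_of_notMem hsV
  have cardl : (insert ylow V).card = M + 1 := card_insert_of_notMem hlV
  set c : ℝ := ((M : ℝ) + 1 + 1) / 2 with hc
  -- rank facts
  have rky : rk y (insert y V) = 1 + rk y V := by
    rw [rk_insert y V hyV, if_pos le_rfl]
  have rkyM : rk y V ≤ M := card_le_card (filter_subset _ _)
  have rks : rk ystar (insert ystar V) = M + 1 := by
    unfold rk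
    rw [filter_true_of_mem, cards]
    intro z hz
    rcases mem_insert.mp hz with h | h
    · exact le_of_eq h
    · exact (hstarV z h).le
  have rkl : rk ylow (insert ylow V) = 1 := by
    unfold rk
    rw [filter_insert, if_pos le_rfl, filter_false_of_mem (fun z hz => not_le.mpr (hlowV z hz))]
    simp
  have rkws : ∀ w ∈ Y', rk w (insert ystar V) = rk w V := by
    intro w hw
    rw [rk_insert _ _ hsV, if_neg (not_le.mpr (hstarV w (mem_union_left _ hw)))]
    omega
  have rkwl : ∀ w ∈ Y', rk w (insert ylow V) = 1 + rk w V := by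
    intro w hw
    rw [rk_insert _ _ hlV, if_pos (hlowV w (mem_union_left _ hw)).le]
  have rkwy : ∀ w ∈ Y', rk w (insert y V) = (if y ≤ w then 1 else 0) + rk w V := by
    intro w hw
    rw [rk_insert _ _ hyV]
  -- counting bounds
  have cnt1 : (Y'.filter (fun w => ¬ y ≤ w)).card ≤ rk y V := by
    apply card_le_card
    intro w hw
    rw [mem_filter] at hw ⊢
    exact ⟨mem_union_left _ hw.1, (not_le.mp hw.2).le⟩
  have cnt2 : (Y'.filter (fun w => y ≤ w)).card + rk y V ≤ M := by
    have h1 : (Y'.filter (fun w => y ≤ w)).card ≤ (V.filter (fun v => ¬ v ≤ y)).card := by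
      apply card_le_card
      intro w hw
      rw [mem_filter] at hw ⊢
      refine ⟨mem_union_left _ hw.1, not_le.mpr ?_⟩
      rcases lt_or_eq_of_le hw.2 with h | h
      · exact h
      · exact absurd (h ▸ hw.1) hyY'
    have h2 := card_filter_add_card_filter_not (s := V) (p := fun v => v ≤ y)
    unfold rk
    rw [hM]
    omega
  -- ABT expansions
  have eY : ABT Y X = |(1 : ℝ) + (rk y V : ℝ) - c|
      + ∑ w ∈ Y', |((if y ≤ w then (1:ℝ) else 0) + (rk w V : ℝ)) - c| := by
    unfold ABT
    rw [hUy, cardy, hY, sum_insert hyY']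
    push_cast [rky]
    congr 1
    apply sum_congr rfl
    intro w hw
    rw [rkwy w hw]
    push_cast
    split <;> norm_num [hc]
  have eS : ABT (insert ystar Y') X = |((M:ℝ) + 1) - c|
      + ∑ w ∈ Y', |(rk w V : ℝ) - c| := by
    unfold ABT
    rw [hUs, cards, sum_insert hsY']
    rw [rks]
    push_cast
    congr 1
    apply sum_congr rfl
    intro w hw
    rw [rkws w hw]
  have eL : ABT (insert ylow Y') X = |(1:ℝ) - c|
      + ∑ w ∈ Y', |(1 : ℝ) + (rk w V : ℝ) - c| := by
    unfold ABT
    rw [hUl, cardl, sum_insert hlY']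
    rw [rkl]
    push_cast
    congr 1
    apply sum_congr rfl
    intro w hw
    rw [rkwl w hw]
    push_cast
    rw [hc]
  -- indicator sums
  have sum1 : ∑ w ∈ Y', (if y ≤ w then (0:ℝ) else 1) = ((Y'.filter (fun w => ¬ y ≤ w)).card : ℝ) := by
    rw [sum_ite, sum_const, sum_const]
    simp
  have sum2 : ∑ w ∈ Y', (if y ≤ w then (1:ℝ) else 0) = ((Y'.filter (fun w => y ≤ w)).card : ℝ) := by
    rw [sum_ite, sum_const, sum_const]
    simp
  have hc1 : (1:ℝ) ≤ c := by
    rw [hc]; have : (0:ℝ) ≤ (M:ℝ) := Nat.cast_nonneg M; linarith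
  have hcN : c ≤ (M:ℝ) + 1 := by
    rw [hc]; have : (0:ℝ) ≤ (M:ℝ) := Nat.cast_nonneg M; linarith
  rcases le_total ((1:ℝ) + (rk y V : ℝ)) c with hr | hr
  · -- compare with ylow version
    refine le_trans ?_ (le_max_left _ _)
    rw [eY, eL]
    have key : ∑ w ∈ Y', |((if y ≤ w then (1:ℝ) else 0) + (rk w V : ℝ)) - c|
        ≤ ∑ w ∈ Y', |(1 : ℝ) + (rk w V : ℝ) - c| + ((Y'.filter (fun w => ¬ y ≤ w)).card : ℝ) := by
      rw [← sum1, ← sum_add_distrib]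
      apply sum_le_sum
      intro w hw
      by_cases hyw : y ≤ w
      · simp [hyw]
      · simp only [if_neg hyw]
        have h := abs_sub_abs_le_abs_sub ((0:ℝ) + (rk w V : ℝ) - c) ((1:ℝ) + (rk w V : ℝ) - c)
        have e : ((0:ℝ) + (rk w V : ℝ) - c) - ((1:ℝ) + (rk w V : ℝ) - c) = -1 := by ring
        rw [e, abs_neg, abs_one] at h
        linarith
    have habs1 : |(1 : ℝ) + (rk y V : ℝ) - c| = c - (1 + (rk y V : ℝ)) := by
      rw [abs_of_nonpos (by linarith)]; ring
    have habs2 : |(1:ℝ) - c| = c - 1 := by rw [abs_of_nonpos (by linarith)]; ring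
    have hcnt1 : ((Y'.filter (fun w => ¬ y ≤ w)).card : ℝ) ≤ (rk y V : ℝ) := by
      exact_mod_cast cnt1
    rw [habs1, habs2]
    linarith
  · refine le_trans ?_ (le_max_right _ _)
    rw [eY, eS]
    have key : ∑ w ∈ Y', |((if y ≤ w then (1:ℝ) else 0) + (rk w V : ℝ)) - c|
        ≤ ∑ w ∈ Y', |(rk w V : ℝ) - c| + ((Y'.filter (fun w => y ≤ w)).card : ℝ) := by
      rw [← sum2, ← sum_add_distrib]
      apply sum_le_sum
      intro w hw
      by_cases hyw : y ≤ w
      · simp only [if_pos hyw]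
        have h := abs_sub_abs_le_abs_sub ((1:ℝ) + (rk w V : ℝ) - c) ((rk w V : ℝ) - c)
        have e : ((1:ℝ) + (rk w V : ℝ) - c) - ((rk w V : ℝ) - c) = 1 := by ring
        rw [e, abs_one] at h
        linarith
      · simp [hyw]
    have habs1 : |(1 : ℝ) + (rk y V : ℝ) - c| = (1 + (rk y V : ℝ)) - c := by
      rw [abs_of_nonneg (by linarith)]
    have habs2 : |((M:ℝ) + 1) - c| = (M:ℝ) + 1 - c := by rw [abs_of_nonneg (by linarith)]
    have hcnt2 : ((Y'.filter (fun w => y ≤ w)).card : ℝ) + (rk y V : ℝ) ≤ (M:ℝ) := by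
      exact_mod_cast cnt2
    rw [habs1, habs2]
    linarith
end

section
/- Let X, Y be disjoint sets of distinct reals with N = |X| + |Y|. Let Ỹ ⊆ Y be nonempty with rank(y, X ∪ Y) ≤ (N+1)/2 for every y ∈ Ỹ, set Y' = Y \ Ỹ with |Y'| = m'. Let Ŷ be any set of m - m' distinct reals all strictly smaller than min(X ∪ Y'), with Y* = Ŷ ∪ Y' having all values distinct from X. Then T(X, Y*) ≤ T(X, Y), where T is the Ansari-Bradley statistic. -/
open Finset

lemma rk_union_of_disjoint (x : ℝ) {U V : Finset ℝ} (h : Disjoint U V) :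
    rk x (U ∪ V) = rk x U + rk x V := by
  unfold rk
  rw [Finset.filter_union,
    Finset.card_union_of_disjoint (Finset.disjoint_filter_filter h)]

lemma rk_mono (Z : Finset ℝ) {x x' : ℝ} (h : x ≤ x') : rk x Z ≤ rk x' Z :=
  Finset.card_le_card (Finset.monotone_filter_right Z (fun z _ hz => le_trans hz h))

theorem stmt17 (X Y Yt Yh : Finset ℝ) (m m' N : ℕ) (hd : Disjoint X Y)
    (hN : N = X.card + Y.card) (hm : Y.card = m)
    (hsub : Yt ⊆ Y) (hne : Yt.Nonempty)
    (hrank : ∀ y ∈ Yt, (rk y (X ∪ Y) : ℝ) ≤ ((N : ℝ) + 1) / 2)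
    (Y' : Finset ℝ) (hY' : Y' = Y \ Yt) (hm' : Y'.card = m')
    (hYh : Yh.card = m - m')
    (hlow : ∀ z ∈ Yh, ∀ w ∈ X ∪ Y', z < w) :
    ABT X (Yh ∪ Y') ≤ ABT X Y := by
  subst hY' hN hm hm'
  set U : Finset ℝ := X ∪ (Y \ Yt) with hU
  -- cardinalities
  have hYtle : Yt.card ≤ Y.card := Finset.card_le_card hsub
  have hsd : (Y \ Yt).card = Y.card - Yt.card := Finset.card_sdiff_of_subset hsub
  have hYhYt : Yh.card = Yt.card := by omega
  -- disjointness
  have dYhU : Disjoint Yh U := by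
    rw [Finset.disjoint_left]
    intro a ha hb
    exact absurd (hlow a ha a hb) (lt_irrefl a)
  have dYtU : Disjoint Yt U := by
    rw [hU, Finset.disjoint_union_right]
    exact ⟨(hd.symm.mono_left hsub), sdiff_disjoint.symm⟩
  -- union decompositions
  have hXY : X ∪ Y = U ∪ Yt := by
    rw [hU, Finset.union_assoc, Finset.sdiff_union_self_eq_union,
      Finset.union_eq_left.mpr hsub]
  have hXYs : X ∪ (Yh ∪ (Y \ Yt)) = U ∪ Yh := by
    rw [hU]
    ext a
    simp only [Finset.mem_union]
    tauto
  -- card equalities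
  have hcard1 : (X ∪ Y).card = U.card + Yt.card := by
    rw [hXY, Finset.card_union_of_disjoint dYtU.symm]
  have hcard2 : (X ∪ (Yh ∪ (Y \ Yt))).card = U.card + Yt.card := by
    rw [hXYs, Finset.card_union_of_disjoint dYhU.symm, hYhYt]
  have hcardX : X.card + Y.card = U.card + Yt.card := by
    rw [← hcard1, Finset.card_union_of_disjoint hd]
  -- main term-wise inequality
  unfold ABT
  apply Finset.sum_le_sum
  intro x hx
  have hrks : rk x (X ∪ (Yh ∪ (Y \ Yt))) = rk x U + Yh.card := by
    rw [hXYs, rk_union_of_disjoint x dYhU.symm]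
    congr 1
    unfold rk
    rw [Finset.filter_true_of_mem]
    intro z hz
    exact le_of_lt (hlow z hz x (Finset.mem_union_left _ hx))
  have hrko : rk x (X ∪ Y) = rk x U + (Yt.filter (fun z => z ≤ x)).card := by
    rw [hXY, rk_union_of_disjoint x dYtU.symm]
    rfl
  set c : ℝ := ((↑(X.card + Y.card) : ℝ) + 1) / 2 with hc
  rw [hcard1, hcard2, hrks, hrko, ← hcardX]
  by_cases hall : ∀ y ∈ Yt, y ≤ x
  · have : Yt.filter (fun z => z ≤ x) = Yt := Finset.filter_true_of_mem hall
    rw [this, hYhYt]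
  · push_neg at hall
    obtain ⟨y, hy, hyx⟩ := hall
    have hxy : x < y := hyx
    set ys : ℝ := Yt.max' hne with hys
    have hysmem : ys ∈ Yt := Yt.max'_mem hne
    have hyys : y ≤ ys := Yt.le_max' y hy
    have hrkys : rk ys (X ∪ Y) = rk ys U + Yt.card := by
      rw [hXY, rk_union_of_disjoint ys dYtU.symm]
      congr 1
      unfold rk
      rw [Finset.filter_true_of_mem]
      intro z hz
      exact Yt.le_max' z hz
    have h1 : (rk ys (X ∪ Y) : ℝ) ≤ c := hrank ys hysmem
    have h2 : rk x U ≤ rk ys U := rk_mono U (le_of_lt (lt_of_lt_of_le hxy hyys))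
    have h3 : (rk x U : ℝ) + Yh.card ≤ c := by
      rw [hrkys] at h1
      push_cast at h1 ⊢
      rw [hYhYt]
      have : (rk x U : ℝ) ≤ (rk ys U : ℝ) := by exact_mod_cast h2
      linarith
    have h4 : (Yt.filter (fun z => z ≤ x)).card ≤ Yh.card := by
      rw [hYhYt]
      exact Finset.card_le_card (Finset.filter_subset _ _)
    have h4' : ((Yt.filter (fun z => z ≤ x)).card : ℝ) ≤ (Yh.card : ℝ) := by
      exact_mod_cast h4
    rw [hc] at h3
    push_cast at h3
    push_cast
    rw [abs_of_nonpos (by push_cast at h3 ⊢; linarith),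
      abs_of_nonpos (by push_cast at h3 ⊢; linarith)]
    push_cast at h3 ⊢
    linarith
end
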